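/- arXiv:2209.10424 — 3 statements merged into one kernel-verified Lean document; each statement's English description precedes it below -/
import Mathlib

section
/- For every 0<β<1, 0≤λ≤1 and z0 in the unit disk D, the set V(z0,λ,β) = {log f'(z0) : f ∈ F(λ,β)} is a convex subset of ℂ. In fact, for f1, f2 ∈ F(λ,β) and 0≤t≤1, the function f_t(z)=∫_0^z exp((1-t) log f1'(ξ) + t log f2'(ξ)) dξ belongs to F(λ,β) and log f_t'(z0) = (1-t) log f1'(z0) + t log f2'(z0). -/
open Complex Set MeasureTheory

noncomputable section

/-- The open unit disk in the complex plane. -/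
def unitDisk : Set ℂ := {z : ℂ | ‖z‖ < 1}

/-- Integral of `g` along the segment from `0` to `z0`:
`∫_0^{z0} g(ξ) dξ = ∫_0^1 z0 · g(t z0) dt`. -/
def segInt (g : ℂ → ℂ) (z0 : ℂ) : ℂ :=
  ∫ t in (0:ℝ)..1, z0 * g ((t : ℂ) * z0)

/-- The branch of `log f'` vanishing at the origin, evaluated at `z0`:
`log f'(z0) = ∫_0^{z0} f''(ξ)/f'(ξ) dξ`. -/
def logDerivAt (f : ℂ → ℂ) (z0 : ℂ) : ℂ :=
  segInt (fun ξ => deriv (deriv f) ξ / deriv f ξ) z0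

/-- The class `F(λ,β)`: analytic `f` on the unit disk with `f(0)=0`, `f'(0)=1`,
`f''(0)=2λ(1-β)`, nonvanishing derivative, and `Re(1 + z f''(z)/f'(z)) > β`. -/
def IsInF (lam beta : ℝ) (f : ℂ → ℂ) : Prop :=
  DifferentiableOn ℂ f unitDisk ∧ f 0 = 0 ∧ deriv f 0 = 1 ∧
    deriv (deriv f) 0 = 2 * (lam : ℂ) * (1 - (beta : ℂ)) ∧
    (∀ z ∈ unitDisk, deriv f z ≠ 0) ∧
    (∀ z ∈ unitDisk, beta < (1 + z * deriv (deriv f) z / deriv f z).re)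

/-- The region of variability `V(z0,λ,β) = {log f'(z0) : f ∈ F(λ,β)}`. -/
def V (z0 : ℂ) (lam beta : ℝ) : Set ℂ :=
  {w : ℂ | ∃ f : ℂ → ℂ, IsInF lam beta f ∧ logDerivAt f z0 = w}

open Metric

lemma isOpen_unitDisk : IsOpen unitDisk :=
  isOpen_lt (by continuity) continuous_const

lemma mul_mem_unitDisk {z : ℂ} (hz : z ∈ unitDisk) {t : ℝ} (h0 : 0 ≤ t) (h1 : t ≤ 1) :
    (t : ℂ) * z ∈ unitDisk := by
  simp only [unitDisk, mem_setOf_eq, norm_mul, Complex.norm_real, Real.norm_eq_abs] at *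
  calc |t| * ‖z‖ ≤ 1 * ‖z‖ := by
        apply mul_le_mul_of_nonneg_right _ (norm_nonneg z)
        rwa [_root_.abs_of_nonneg h0]
    _ < 1 := by rwa [one_mul]

lemma segInt_zero (g : ℂ → ℂ) : segInt g 0 = 0 := by
  simp [segInt]

lemma segInt_hasDerivAt {g : ℂ → ℂ} (hg : DifferentiableOn ℂ g unitDisk)
    {z : ℂ} (hz : z ∈ unitDisk) : HasDerivAt (segInt g) (g z) z := by
  have hA : AnalyticOnNhd ℂ g unitDisk := hg.analyticOnNhd isOpen_unitDisk
  have hgc : ContinuousOn g unitDisk := hg.continuousOn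
  have hdc : ContinuousOn (deriv g) unitDisk := hA.deriv.continuousOn
  have hzab : ‖z‖ < 1 := hz
  set r : ℝ := (1 + ‖z‖) / 2 with hrdef
  have hzlt : ‖z‖ < r := by rw [hrdef]; linarith
  have hr1 : r < 1 := by rw [hrdef]; linarith
  have hr0 : 0 ≤ r := le_trans (norm_nonneg z) hzlt.le
  set ε : ℝ := r - ‖z‖ with hεdef
  have hε0 : 0 < ε := by rw [hεdef]; linarith
  have hK : closedBall (0:ℂ) r ⊆ unitDisk := by
    intro w hw
    rw [Metric.mem_closedBall, Complex.dist_eq, sub_zero] at hw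
    exact lt_of_le_of_lt hw hr1
  have hball : ∀ x ∈ ball z ε, ‖x‖ < r := by
    intro x hx
    rw [Metric.mem_ball, Complex.dist_eq] at hx
    calc ‖x‖ = ‖(x - z) + z‖ := by rw [sub_add_cancel]
      _ ≤ ‖x - z‖ + ‖z‖ := norm_add_le _ _
      _ < ε + ‖z‖ := by linarith
      _ = r := by rw [hεdef]; ring
  have hmemK : ∀ x ∈ ball z ε, ∀ t : ℝ, 0 ≤ t → t ≤ 1 → (t:ℂ) * x ∈ closedBall (0:ℂ) r := by
    intro x hx t h0 h1
    rw [Metric.mem_closedBall, Complex.dist_eq, sub_zero, norm_mul, Complex.norm_real, Real.norm_eq_abs]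
    calc |t| * ‖x‖ ≤ 1 * ‖x‖ := by
          apply mul_le_mul_of_nonneg_right _ (norm_nonneg x)
          rwa [_root_.abs_of_nonneg h0]
      _ ≤ r := by rw [one_mul]; exact (hball x hx).le
  have hmemD : ∀ x ∈ ball z ε, ∀ t : ℝ, 0 ≤ t → t ≤ 1 → (t:ℂ) * x ∈ unitDisk :=
    fun x hx t h0 h1 => hK (hmemK x hx t h0 h1)
  -- bounds
  obtain ⟨C1, hC1⟩ := (isCompact_closedBall (0:ℂ) r).exists_bound_of_continuousOn (hgc.mono hK)
  obtain ⟨C2, hC2⟩ := (isCompact_closedBall (0:ℂ) r).exists_bound_of_continuousOn (hdc.mono hK)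
  have h0K : (0:ℂ) ∈ closedBall (0:ℂ) r := by simp [hr0]
  have hC2nn : 0 ≤ C2 := le_trans (norm_nonneg _) (hC2 0 h0K)
  set F' : ℂ → ℝ → ℂ := fun x t => g ((t:ℂ)*x) + (t:ℂ) * x * deriv g ((t:ℂ)*x) with hF'def
  have contOn : ∀ u : ℂ → ℂ, ContinuousOn u unitDisk → ∀ x ∈ unitDisk,
      ContinuousOn (fun t : ℝ => u ((t:ℂ) * x)) (Set.Icc 0 1) := by
    intro u hu x hx
    exact hu.comp ((Complex.continuous_ofReal.mul continuous_const).continuousOn)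
      (fun t ht => mul_mem_unitDisk hx ht.1 ht.2)
  have hzD : z ∈ unitDisk := hz
  have hmain := intervalIntegral.hasDerivAt_integral_of_dominated_loc_of_deriv_le
    (F := fun x (t:ℝ) => x * g ((t:ℂ)*x)) (F' := F') (x₀ := z) (a := (0:ℝ)) (b := 1)
    (bound := fun _ => C1 + r * C2) (μ := volume) (Metric.ball_mem_nhds z hε0)
    ?_ ?_ ?_ ?_ ?_ ?_
  · -- conclude
    obtain ⟨-, hder⟩ := hmain
    have hval : (∫ t in (0:ℝ)..1, F' z t) = g z := by
      have key : ∀ t ∈ Set.uIcc (0:ℝ) 1,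
          HasDerivAt (fun s : ℝ => (s:ℂ) * g ((s:ℂ)*z)) (F' z t) t := by
        intro t ht
        rw [Set.uIcc_of_le zero_le_one] at ht
        have hmem : (t:ℂ)*z ∈ unitDisk := mul_mem_unitDisk hz ht.1 ht.2
        have hder2 : HasDerivAt (fun w : ℂ => g (w * z)) (deriv g ((t:ℂ)*z) * (1 * z)) ↑t :=
          ((hA _ hmem).differentiableAt.hasDerivAt).comp ((t:ℝ):ℂ) ((hasDerivAt_id ((t:ℝ):ℂ)).mul_const z)
        have hre : HasDerivAt (fun s : ℝ => g ((s:ℂ)*z)) (deriv g ((t:ℂ)*z) * (1 * z)) t :=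
          hder2.comp_ofReal
        have hid : HasDerivAt (fun s : ℝ => ((s:ℝ):ℂ)) 1 t := by
          simpa using (hasDerivAt_id t).ofReal_comp
        have := hid.mul hre
        refine this.congr_deriv ?_
        simp only [hF'def, id_eq]; push_cast; ring
      have hcont : ContinuousOn (fun t : ℝ => F' z t) (Set.uIcc 0 1) := by
        rw [Set.uIcc_of_le zero_le_one]
        apply ContinuousOn.add (contOn g hgc z hzD)
        exact ((Complex.continuous_ofReal.mul continuous_const).continuousOn).mul
          (contOn (deriv g) hdc z hzD)
      have := intervalIntegral.integral_eq_sub_of_hasDerivAt key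
        (hcont.intervalIntegrable)
      rw [this]
      push_cast
      simp
    rw [hval] at hder
    exact hder
  · -- hF_meas
    filter_upwards [Metric.ball_mem_nhds z hε0] with x hx
    apply ContinuousOn.aestronglyMeasurable _ measurableSet_uIoc
    rw [Set.uIoc_of_le zero_le_one]
    have hxD : x ∈ unitDisk := hK (by simpa using (hball x hx).le)
    exact (continuousOn_const.mul ((contOn g hgc x hxD).mono Set.Ioc_subset_Icc_self))
  · -- hF_int
    apply ContinuousOn.intervalIntegrable
    rw [Set.uIcc_of_le zero_le_one]
    exact continuousOn_const.mul (contOn g hgc z hzD)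
  · -- hF'_meas
    apply ContinuousOn.aestronglyMeasurable _ measurableSet_uIoc
    rw [Set.uIoc_of_le zero_le_one]
    apply ContinuousOn.mono _ (Set.Ioc_subset_Icc_self)
    apply ContinuousOn.add (contOn g hgc z hzD)
    exact ((Complex.continuous_ofReal.mul continuous_const).continuousOn).mul
      (contOn (deriv g) hdc z hzD)
  · -- h_bound
    apply Filter.Eventually.of_forall
    intro t ht x hx
    rw [Set.uIoc_of_le zero_le_one] at ht
    have hKmem := hmemK x hx t ht.1.le ht.2
    have h1 : ‖g ((t:ℂ)*x)‖ ≤ C1 := hC1 _ hKmem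
    have h2 : ‖deriv g ((t:ℂ)*x)‖ ≤ C2 := hC2 _ hKmem
    calc ‖F' x t‖ ≤ ‖g ((t:ℂ)*x)‖ + ‖(t:ℂ) * x * deriv g ((t:ℂ)*x)‖ := norm_add_le _ _
      _ ≤ C1 + r * C2 := by
          apply add_le_add h1
          rw [norm_mul, norm_mul]
          have htn : ‖((t:ℝ):ℂ)‖ ≤ 1 := by
            rw [Complex.norm_real, Real.norm_eq_abs, _root_.abs_of_nonneg ht.1.le]; exact ht.2
          have hxn : ‖x‖ ≤ r := (hball x hx).le
          calc ‖((t:ℝ):ℂ)‖ * ‖x‖ * ‖deriv g ((t:ℂ)*x)‖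
              ≤ 1 * r * C2 := by
                apply mul_le_mul _ h2 (norm_nonneg _) (by positivity)
                exact mul_le_mul htn hxn (norm_nonneg _) zero_le_one
            _ = r * C2 := by ring
  · exact intervalIntegrable_const
  · -- h_diff
    apply Filter.Eventually.of_forall
    intro t ht x hx
    rw [Set.uIoc_of_le zero_le_one] at ht
    have hmem : (t:ℂ)*x ∈ unitDisk := hmemD x hx t ht.1.le ht.2
    have h1 : HasDerivAt (fun y : ℂ => g ((t:ℂ)*y)) (deriv g ((t:ℂ)*x) * ((t:ℂ) * 1)) x :=
      ((hA _ hmem).differentiableAt.hasDerivAt).comp x ((hasDerivAt_id x).const_mul ((t:ℝ):ℂ))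
    have := (hasDerivAt_id x).mul h1
    refine this.congr_deriv ?_
    simp only [hF'def, id_eq]; push_cast; ring

lemma contOn_seg {u : ℂ → ℂ} (hu : ContinuousOn u unitDisk) {x : ℂ} (hx : x ∈ unitDisk) :
    ContinuousOn (fun t : ℝ => u ((t:ℂ) * x)) (Set.Icc 0 1) :=
  hu.comp ((Complex.continuous_ofReal.mul continuous_const).continuousOn)
    (fun t ht => mul_mem_unitDisk hx ht.1 ht.2)

/-- `V(z0,λ,β)` is convex; in fact for `f1, f2 ∈ F(λ,β)` and `0 ≤ t ≤ 1`,
the function `f_t(z) = ∫_0^z exp((1-t) log f1'(ξ) + t log f2'(ξ)) dξ` belongs to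
`F(λ,β)` and `log f_t'(z0) = (1-t) log f1'(z0) + t log f2'(z0)`. -/
theorem V_isConvex (beta lam : ℝ) (hbeta : 0 < beta ∧ beta < 1)
    (hlam : 0 ≤ lam ∧ lam ≤ 1) (z0 : ℂ) (hz0 : z0 ∈ unitDisk) :
    Convex ℝ (V z0 lam beta) ∧
      ∀ f1 f2 : ℂ → ℂ, IsInF lam beta f1 → IsInF lam beta f2 →
        ∀ t : ℝ, 0 ≤ t → t ≤ 1 →
          IsInF lam beta
            (fun z => segInt (fun ξ =>
              Complex.exp ((1 - (t : ℂ)) * logDerivAt f1 ξ + (t : ℂ) * logDerivAt f2 ξ)) z) ∧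
          logDerivAt
            (fun z => segInt (fun ξ =>
              Complex.exp ((1 - (t : ℂ)) * logDerivAt f1 ξ + (t : ℂ) * logDerivAt f2 ξ)) z) z0
            = (1 - (t : ℂ)) * logDerivAt f1 z0 + (t : ℂ) * logDerivAt f2 z0:= by
  have main : ∀ f1 f2 : ℂ → ℂ, IsInF lam beta f1 → IsInF lam beta f2 →
      ∀ t : ℝ, 0 ≤ t → t ≤ 1 →
        IsInF lam beta
          (fun z => segInt (fun ξ =>
            Complex.exp ((1 - (t : ℂ)) * logDerivAt f1 ξ + (t : ℂ) * logDerivAt f2 ξ)) z) ∧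
        logDerivAt
          (fun z => segInt (fun ξ =>
            Complex.exp ((1 - (t : ℂ)) * logDerivAt f1 ξ + (t : ℂ) * logDerivAt f2 ξ)) z) z0
          = (1 - (t : ℂ)) * logDerivAt f1 z0 + (t : ℂ) * logDerivAt f2 z0 := by
    intro f1 f2 hf1 hf2 t ht0 ht1
    obtain ⟨hd1, hz1, hd1', hd1'', hne1, hre1⟩ := hf1
    obtain ⟨hd2, hz2, hd2', hd2'', hne2, hre2⟩ := hf2
    set g1 : ℂ → ℂ := fun ξ => deriv (deriv f1) ξ / deriv f1 ξ with hg1def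
    set g2 : ℂ → ℂ := fun ξ => deriv (deriv f2) ξ / deriv f2 ξ with hg2def
    have hg1 : DifferentiableOn ℂ g1 unitDisk := by
      have hA := hd1.analyticOnNhd isOpen_unitDisk
      exact (hA.deriv.deriv.differentiableOn).div (hA.deriv.differentiableOn) hne1
    have hg2 : DifferentiableOn ℂ g2 unitDisk := by
      have hA := hd2.analyticOnNhd isOpen_unitDisk
      exact (hA.deriv.deriv.differentiableOn).div (hA.deriv.differentiableOn) hne2
    set q : ℂ → ℂ := fun ξ =>
      Complex.exp ((1 - (t : ℂ)) * logDerivAt f1 ξ + (t : ℂ) * logDerivAt f2 ξ) with hqdef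
    have heta : (fun z => segInt q z) = segInt q := rfl
    have hq : ∀ z ∈ unitDisk,
        HasDerivAt q (q z * ((1-(t:ℂ)) * g1 z + (t:ℂ) * g2 z)) z := by
      intro z hz
      have h1 : HasDerivAt (logDerivAt f1) (g1 z) z := segInt_hasDerivAt hg1 hz
      have h2 : HasDerivAt (logDerivAt f2) (g2 z) z := segInt_hasDerivAt hg2 hz
      exact ((h1.const_mul (1-(t:ℂ))).add (h2.const_mul (t:ℂ))).cexp
    have hqd : DifferentiableOn ℂ q unitDisk :=
      fun z hz => ((hq z hz).differentiableAt).differentiableWithinAt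
    have hFt : ∀ z ∈ unitDisk, HasDerivAt (segInt q) (q z) z :=
      fun z hz => segInt_hasDerivAt hqd hz
    have hderiv : ∀ z ∈ unitDisk, deriv (segInt q) z = q z := fun z hz => (hFt z hz).deriv
    have hderiv2 : ∀ z ∈ unitDisk,
        deriv (deriv (segInt q)) z = q z * ((1-(t:ℂ)) * g1 z + (t:ℂ) * g2 z) := by
      intro z hz
      have hEq : deriv (segInt q) =ᶠ[nhds z] q :=
        Filter.eventuallyEq_of_mem (isOpen_unitDisk.mem_nhds hz) (fun w hw => hderiv w hw)
      rw [hEq.deriv_eq]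
      exact (hq z hz).deriv
    have hqne : ∀ z, q z ≠ 0 := fun z => Complex.exp_ne_zero _
    have hratio : ∀ z ∈ unitDisk, deriv (deriv (segInt q)) z / deriv (segInt q) z
        = (1-(t:ℂ)) * g1 z + (t:ℂ) * g2 z := by
      intro z hz
      rw [hderiv2 z hz, hderiv z hz, mul_div_cancel_left₀ _ (hqne z)]
    have h0D : (0:ℂ) ∈ unitDisk := by simp [unitDisk]
    have hq0 : q 0 = 1 := by
      simp [hqdef, logDerivAt, segInt_zero]
    have hg10 : g1 0 = 2*(lam:ℂ)*(1-(beta:ℂ)) := by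
      simp only [hg1def]
      rw [hd1', hd1'', div_one]
    have hg20 : g2 0 = 2*(lam:ℂ)*(1-(beta:ℂ)) := by
      simp only [hg2def]
      rw [hd2', hd2'', div_one]
    constructor
    · rw [heta]
      refine ⟨?_, ?_, ?_, ?_, ?_, ?_⟩
      · exact fun z hz => ((hFt z hz).differentiableAt).differentiableWithinAt
      · exact segInt_zero q
      · rw [hderiv 0 h0D, hq0]
      · rw [hderiv2 0 h0D, hq0, hg10, hg20]; ring
      · intro z hz; rw [hderiv z hz]; exact hqne z
      · intro z hz
        rw [mul_div_assoc, hratio z hz]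
        have hA' : beta < (1 + z * g1 z).re := by
          have := hre1 z hz; rwa [mul_div_assoc] at this
        have hB' : beta < (1 + z * g2 z).re := by
          have := hre2 z hz; rwa [mul_div_assoc] at this
        have key : (1 : ℂ) + z * ((1-(t:ℂ)) * g1 z + (t:ℂ) * g2 z)
            = ((1-t : ℝ):ℂ) * (1 + z * g1 z) + ((t:ℝ):ℂ) * (1 + z * g2 z) := by
          push_cast; ring
        rw [key, Complex.add_re, Complex.re_ofReal_mul, Complex.re_ofReal_mul]
        rcases eq_or_lt_of_le ht0 with h|h
        · rw [← h]; simpa using hA'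
        · have h2' : t * beta < t * (1 + z * g2 z).re := by
            exact mul_lt_mul_of_pos_left hB' h
          have h1' : (1-t) * beta ≤ (1-t) * (1 + z * g1 z).re :=
            mul_le_mul_of_nonneg_left hA'.le (by linarith)
          nlinarith
    · rw [heta]
      have hcongr : logDerivAt (segInt q) z0
          = ∫ s in (0:ℝ)..1,
              ((1-(t:ℂ)) * (z0 * g1 ((s:ℂ)*z0)) + (t:ℂ) * (z0 * g2 ((s:ℂ)*z0))) := by
        simp only [logDerivAt, segInt]
        apply intervalIntegral.integral_congr
        intro s hs
        rw [Set.uIcc_of_le zero_le_one] at hs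
        have hm := mul_mem_unitDisk hz0 hs.1 hs.2
        simp only
        rw [hratio _ hm]
        ring
      have hint1 : IntervalIntegrable (fun s : ℝ => (1-(t:ℂ)) * (z0 * g1 ((s:ℂ)*z0)))
          MeasureTheory.volume 0 1 := by
        apply ContinuousOn.intervalIntegrable
        rw [Set.uIcc_of_le zero_le_one]
        exact continuousOn_const.mul (continuousOn_const.mul (contOn_seg hg1.continuousOn hz0))
      have hint2 : IntervalIntegrable (fun s : ℝ => (t:ℂ) * (z0 * g2 ((s:ℂ)*z0)))
          MeasureTheory.volume 0 1 := by
        apply ContinuousOn.intervalIntegrable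
        rw [Set.uIcc_of_le zero_le_one]
        exact continuousOn_const.mul (continuousOn_const.mul (contOn_seg hg2.continuousOn hz0))
      rw [hcongr, intervalIntegral.integral_add hint1 hint2]
      simp only [logDerivAt, segInt, intervalIntegral.integral_const_mul, hg1def, hg2def]
  refine ⟨?_, main⟩
  intro x hx y hy a b ha hb hab
  obtain ⟨f1, hf1, rfl⟩ := hx
  obtain ⟨f2, hf2, rfl⟩ := hy
  obtain ⟨hmem, heq⟩ := main f1 f2 hf1 hf2 b hb (by linarith)
  refine ⟨_, hmem, ?_⟩
  rw [heq]
  have hca : (a:ℂ) + (b:ℂ) = 1 := by norm_cast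
  have hab' : (1 - (b:ℂ)) = (a:ℂ) := by rw [← hca]; ring
  simp only [Complex.real_smul, hab']
end
end

section
/- Let 0<β<1, 0≤λ≤1 and z0∈D. If λ=1 or z0=0, then V(z0,λ,β) = {-2(1-β) log(1-λ z0)}, i.e. every f ∈ F(λ,β) satisfies log f'(z0) = -2(1-β) log(1-λ z0). In particular, when λ=1 the class F(1,β) consists of the single function f(z)=∫_0^z exp(-2(1-β) log(1-ξ)) dξ. -/
open Complex Set MeasureTheory

noncomputable section

namespace Vdeg

lemma mem_disk {z : ℂ} : z ∈ unitDisk ↔ ‖z‖ < 1 := Iff.rfl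

lemma disk_eq : unitDisk = Metric.ball (0:ℂ) 1 := by
  ext z; simp [unitDisk, Metric.mem_ball, Complex.dist_eq]

lemma isOpen_disk : IsOpen unitDisk := disk_eq ▸ Metric.isOpen_ball

lemma zero_mem_disk : (0:ℂ) ∈ unitDisk := by simp [mem_disk]

lemma re_pos {lam : ℝ} (h0 : 0 ≤ lam) (h1 : lam ≤ 1) {z : ℂ} (hz : z ∈ unitDisk) :
    0 < (1 - (lam:ℂ) * z).re := by
  have hz' : ‖z‖ < 1 := hz
  have habs : ‖(lam:ℂ)*z‖ = lam * ‖z‖ := by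
    rw [norm_mul, Complex.norm_of_nonneg h0]
  have h2 : ((lam:ℂ)*z).re < 1 := by
    calc ((lam:ℂ)*z).re ≤ |((lam:ℂ)*z).re| := le_abs_self _
      _ ≤ ‖(lam:ℂ)*z‖ := Complex.abs_re_le_norm _
      _ = lam * ‖z‖ := habs
      _ < 1 := by nlinarith [norm_nonneg z]
  simp only [Complex.sub_re, Complex.one_re]
  linarith

lemma slit {lam : ℝ} (h0 : 0 ≤ lam) (h1 : lam ≤ 1) {z : ℂ} (hz : z ∈ unitDisk) :
    (1 - (lam:ℂ) * z) ∈ Complex.slitPlane :=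
  Complex.mem_slitPlane_iff.mpr (Or.inl (re_pos h0 h1 hz))

lemma slit_ne {lam : ℝ} (h0 : 0 ≤ lam) (h1 : lam ≤ 1) {z : ℂ} (hz : z ∈ unitDisk) :
    (1 - (lam:ℂ) * z) ≠ 0 :=
  Complex.slitPlane_ne_zero (slit h0 h1 hz)

lemma hasDerivAt_inner (a z : ℂ) : HasDerivAt (fun w : ℂ => 1 - a * w) (-a) z := by
  simpa using ((hasDerivAt_id z).const_mul a).const_sub 1

lemma hasDerivAt_explog (c : ℂ) {u : ℂ → ℂ} {u' z : ℂ} (hu : HasDerivAt u u' z)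
    (hs : u z ∈ Complex.slitPlane) :
    HasDerivAt (fun w => Complex.exp (c * Complex.log (u w)))
      (Complex.exp (c * Complex.log (u z)) * c * u' * (u z)⁻¹) z := by
  have h2 : HasDerivAt (fun w => Complex.log (u w)) ((u z)⁻¹ * u') z :=
    (Complex.hasDerivAt_log hs).comp z hu
  have h3 := (h2.const_mul c).cexp
  refine h3.congr_deriv (Eq.symm ?_)
  ring

lemma smul_mem_disk {z : ℂ} (hz : z ∈ unitDisk) {t : ℝ} (ht : t ∈ Set.uIcc (0:ℝ) 1) :
    (t:ℂ) * z ∈ unitDisk := by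
  rw [Set.uIcc_of_le zero_le_one] at ht
  have h1 : |t| ≤ 1 := abs_le.mpr ⟨by linarith [ht.1], ht.2⟩
  have : ‖(t:ℂ)*z‖ = |t| * ‖z‖ := by
    rw [norm_mul, Complex.norm_real, Real.norm_eq_abs]
  rw [mem_disk, this]
  calc |t| * ‖z‖ ≤ 1 * ‖z‖ :=
        mul_le_mul_of_nonneg_right h1 (norm_nonneg z)
    _ = ‖z‖ := one_mul _
    _ < 1 := hz

lemma segInt_congr {a b : ℂ → ℂ} {z : ℂ} (hz : z ∈ unitDisk)
    (h : ∀ w ∈ unitDisk, a w = b w) : segInt a z = segInt b z := by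
  unfold segInt
  apply intervalIntegral.integral_congr
  intro t ht
  simp only
  rw [h _ (smul_mem_disk hz ht)]

lemma segInt_eq {h H : ℂ → ℂ} (hH0 : H 0 = 0)
    (hd : ∀ w ∈ unitDisk, HasDerivAt H (h w) w)
    (hc : ContinuousOn h unitDisk) {z : ℂ} (hz : z ∈ unitDisk) :
    segInt h z = H z := by
  have key : ∀ t ∈ Set.uIcc (0:ℝ) 1,
      HasDerivAt (fun s : ℝ => H ((s:ℂ)*z)) (z * h ((t:ℂ)*z)) t := by
    intro t ht
    have hmul : HasDerivAt (fun w : ℂ => w * z) z (t:ℂ) := hasDerivAt_mul_const z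
    have hin := HasDerivAt.comp (𝕜 := ℂ) (t:ℂ) (hd ((t:ℂ)*z) (smul_mem_disk hz ht)) hmul
    have := hin.comp_ofReal
    refine this.congr_deriv (Eq.symm ?_)
    ring
  have hcont : ContinuousOn (fun t : ℝ => z * h ((t:ℂ)*z)) (Set.uIcc (0:ℝ) 1) := by
    apply continuousOn_const.mul
    exact hc.comp (Continuous.continuousOn (by continuity)) (fun t ht => smul_mem_disk hz ht)
  have := intervalIntegral.integral_eq_sub_of_hasDerivAt key hcont.intervalIntegrable
  unfold segInt
  rw [this]
  push_cast
  simp [hH0]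


/-- the candidate derivative -/
def hf (beta lam : ℝ) : ℂ → ℂ :=
  fun ξ => Complex.exp (-2 * (1 - (beta:ℂ)) * Complex.log (1 - (lam:ℂ) * ξ))

/-- the extremal function -/
def gf (beta lam : ℝ) : ℂ → ℂ := fun z => segInt (hf beta lam) z

lemma hasDerivAt_hf (beta lam : ℝ) (h0 : 0 ≤ lam) (h1 : lam ≤ 1) {z : ℂ}
    (hz : z ∈ unitDisk) :
    HasDerivAt (hf beta lam)
      (hf beta lam z * (-2 * (1 - (beta:ℂ))) * (-(lam:ℂ)) * (1 - (lam:ℂ)*z)⁻¹) z := by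
  have := hasDerivAt_explog (-2 * (1 - (beta:ℂ))) (hasDerivAt_inner ((lam:ℂ)) z)
    (slit h0 h1 hz)
  exact this

lemma hf_zero (beta lam : ℝ) : hf beta lam 0 = 1 := by
  simp [hf]

lemma continuousOn_hf (beta lam : ℝ) (h0 : 0 ≤ lam) (h1 : lam ≤ 1) :
    ContinuousOn (hf beta lam) unitDisk := fun z hz =>
  (hasDerivAt_hf beta lam h0 h1 hz).continuousAt.continuousWithinAt

lemma primitive_spec (beta lam : ℝ) (hb1 : beta < 1) (h0 : 0 ≤ lam) (h1 : lam ≤ 1) :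
    ∃ H : ℂ → ℂ, H 0 = 0 ∧ ∀ w ∈ unitDisk, HasDerivAt H (hf beta lam w) w := by
  rcases eq_or_ne lam 0 with rfl | hlne
  · refine ⟨id, rfl, fun w hw => ?_⟩
    have : hf beta 0 w = 1 := by simp [hf]
    rw [this]
    exact hasDerivAt_id w
  have hlC : ((lam:ℂ)) ≠ 0 := by exact_mod_cast hlne
  rcases eq_or_ne beta (1/2) with rfl | hbne
  · -- beta = 1/2
    refine ⟨fun z => -((lam:ℂ)⁻¹ * Complex.log (1 - (lam:ℂ)*z)), by simp, fun w hw => ?_⟩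
    have hD := (((Complex.hasDerivAt_log (slit h0 h1 hw)).comp w
      (hasDerivAt_inner ((lam:ℂ)) w)).const_mul ((lam:ℂ)⁻¹)).neg
    refine hD.congr_deriv (Eq.symm ?_)
    have hfw : hf (1/2) lam w = (1 - (lam:ℂ)*w)⁻¹ := by
      have hc : (-2 * (1 - (((1:ℝ)/2:ℝ):ℂ))) = -1 := by push_cast; ring
      rw [hf, hc, neg_one_mul, Complex.exp_neg, Complex.exp_log (slit_ne h0 h1 hw)]
    rw [hfw]
    field_simp
  · -- beta ≠ 1/2
    have hcc : (1 + (-2 * (1 - (beta:ℂ)))) ≠ 0 := by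
      have : (1 + (-2 * (1 - (beta:ℂ)))) = (((2*beta - 1 : ℝ)):ℂ) := by push_cast; ring
      rw [this, Complex.ofReal_ne_zero]
      intro hcon
      apply hbne
      linarith
    refine ⟨fun z => (-(lam:ℂ) * (1 + (-2 * (1 - (beta:ℂ)))))⁻¹ *
      ((1 - (lam:ℂ)*z) * hf beta lam z - 1), by simp [hf_zero], fun w hw => ?_⟩
    have hprod := (hasDerivAt_inner ((lam:ℂ)) w).mul (hasDerivAt_hf beta lam h0 h1 hw)
    have hD := (hprod.sub_const 1).const_mul ((-(lam:ℂ) * (1 + (-2 * (1 - (beta:ℂ)))))⁻¹)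
    refine hD.congr_deriv (Eq.symm ?_)
    have hne := slit_ne h0 h1 hw
    have hK : (-(lam:ℂ) * (1 + -2 * (1 - (beta:ℂ)))) ≠ 0 :=
      mul_ne_zero (neg_ne_zero.mpr hlC) hcc
    rw [eq_inv_mul_iff_mul_eq₀ hK]
    field_simp
    ring

lemma hasDerivAt_gf (beta lam : ℝ) (hb1 : beta < 1) (h0 : 0 ≤ lam) (h1 : lam ≤ 1) :
    ∀ z ∈ unitDisk, HasDerivAt (gf beta lam) (hf beta lam z) z := by
  obtain ⟨H, hH0, hd⟩ := primitive_spec beta lam hb1 h0 h1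
  have heq : ∀ w ∈ unitDisk, gf beta lam w = H w := fun w hw =>
    segInt_eq hH0 hd (continuousOn_hf beta lam h0 h1) hw
  intro z hz
  exact (hd z hz).congr_of_eventuallyEq
    (Filter.eventuallyEq_of_mem (isOpen_disk.mem_nhds hz) heq)

lemma deriv_gf (beta lam : ℝ) (hb1 : beta < 1) (h0 : 0 ≤ lam) (h1 : lam ≤ 1) {z : ℂ}
    (hz : z ∈ unitDisk) : deriv (gf beta lam) z = hf beta lam z :=
  (hasDerivAt_gf beta lam hb1 h0 h1 z hz).deriv

lemma deriv2_gf (beta lam : ℝ) (hb1 : beta < 1) (h0 : 0 ≤ lam) (h1 : lam ≤ 1) {z : ℂ}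
    (hz : z ∈ unitDisk) :
    deriv (deriv (gf beta lam)) z
      = hf beta lam z * (-2 * (1 - (beta:ℂ))) * (-(lam:ℂ)) * (1 - (lam:ℂ)*z)⁻¹ := by
  have hev : deriv (gf beta lam) =ᶠ[nhds z] hf beta lam :=
    Filter.eventuallyEq_of_mem (isOpen_disk.mem_nhds hz)
      (fun w hw => deriv_gf beta lam hb1 h0 h1 hw)
  rw [hev.deriv_eq]
  exact (hasDerivAt_hf beta lam h0 h1 hz).deriv

lemma re_pos_halfplane {w : ℂ} (hw : ‖w‖ < 1) : 0 < ((1+w)/(1-w)).re := by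
  have h1 : (1 - w) ≠ 0 := by
    intro h
    have : w = 1 := by linear_combination -h
    rw [this] at hw; simp at hw
  have hsq : 0 < Complex.normSq (1-w) := Complex.normSq_pos.mpr h1
  have hlt : Complex.normSq w < 1 := by
    rw [← Complex.sq_norm]; nlinarith [norm_nonneg w]
  have key : (1+w).re * (1-w).re / Complex.normSq (1-w)
      + (1+w).im * (1-w).im / Complex.normSq (1-w)
      = (1 - Complex.normSq w) / Complex.normSq (1-w) := by
    rw [← add_div]
    congr 1
    simp [Complex.normSq_apply, Complex.add_re, Complex.sub_re, Complex.add_im,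
      Complex.sub_im]
    ring
  rw [Complex.div_re, key]
  exact div_pos (by linarith) hsq


lemma isInF_gf (beta lam : ℝ) (hb0 : 0 < beta) (hb1 : beta < 1) (h0 : 0 ≤ lam)
    (h1 : lam ≤ 1) : IsInF lam beta (gf beta lam) := by
  have hβne : (1 - (beta:ℂ)) ≠ 0 := by
    have : ((beta:ℂ)) ≠ 1 := by exact_mod_cast ne_of_lt hb1
    exact sub_ne_zero.mpr (Ne.symm this)
  refine ⟨?_, ?_, ?_, ?_, ?_, ?_⟩
  · exact fun z hz =>
      (hasDerivAt_gf beta lam hb1 h0 h1 z hz).differentiableAt.differentiableWithinAt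
  · simp [gf, segInt]
  · rw [deriv_gf beta lam hb1 h0 h1 zero_mem_disk, hf_zero]
  · rw [deriv2_gf beta lam hb1 h0 h1 zero_mem_disk, hf_zero]
    simp
    ring
  · intro z hz
    rw [deriv_gf beta lam hb1 h0 h1 hz]
    exact Complex.exp_ne_zero _
  · intro z hz
    rw [deriv_gf beta lam hb1 h0 h1 hz, deriv2_gf beta lam hb1 h0 h1 hz]
    have hne : hf beta lam z ≠ 0 := Complex.exp_ne_zero _
    have hne2 : (1 - (lam:ℂ)*z) ≠ 0 := slit_ne h0 h1 hz
    have habs : ‖(lam:ℂ)*z‖ < 1 := by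
      rw [norm_mul, Complex.norm_of_nonneg h0]
      have : ‖z‖ < 1 := hz
      nlinarith [norm_nonneg z]
    have key : 1 + z * (hf beta lam z * (-2 * (1 - (beta:ℂ))) * (-(lam:ℂ))
          * (1 - (lam:ℂ)*z)⁻¹) / hf beta lam z
        = ((beta:ℝ):ℂ) + (((1:ℝ) - beta : ℝ):ℂ)
            * ((1 + (lam:ℂ)*z)/(1 - (lam:ℂ)*z)) := by
      push_cast
      have hne3 : (1 - z * (lam:ℂ)) ≠ 0 := by rwa [mul_comm] at hne2
      field_simp
      ring
    rw [key]
    have hrepos := re_pos_halfplane habs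
    rw [Complex.add_re, Complex.ofReal_re, Complex.re_ofReal_mul]
    nlinarith

lemma segInt_loglike (lam : ℝ) (c : ℂ) (h0 : 0 ≤ lam) (h1 : lam ≤ 1) {z0 : ℂ}
    (hz0 : z0 ∈ unitDisk) :
    segInt (fun w => c * (-(lam:ℂ)) * (1 - (lam:ℂ)*w)⁻¹) z0
      = c * Complex.log (1 - (lam:ℂ)*z0) := by
  have hd : ∀ w ∈ unitDisk,
      HasDerivAt (fun z => c * Complex.log (1 - (lam:ℂ)*z))
        (c * (-(lam:ℂ)) * (1 - (lam:ℂ)*w)⁻¹) w := by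
    intro w hw
    have := ((Complex.hasDerivAt_log (slit h0 h1 hw)).comp w
      (hasDerivAt_inner ((lam:ℂ)) w)).const_mul c
    refine this.congr_deriv (Eq.symm ?_)
    ring
  have hcont : ContinuousOn (fun w => c * (-(lam:ℂ)) * (1 - (lam:ℂ)*w)⁻¹) unitDisk :=
    continuousOn_const.mul
      (((continuous_const.sub (continuous_const.mul continuous_id)).continuousOn).inv₀
        (fun w hw => slit_ne h0 h1 hw))
  exact segInt_eq (by simp) hd hcont hz0

lemma logDeriv_gf (beta lam : ℝ) (hb0 : 0 < beta) (hb1 : beta < 1) (h0 : 0 ≤ lam)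
    (h1 : lam ≤ 1) {z0 : ℂ} (hz0 : z0 ∈ unitDisk) :
    logDerivAt (gf beta lam) z0 = -2 * (1 - (beta:ℂ)) * Complex.log (1 - (lam:ℂ)*z0) := by
  unfold logDerivAt
  rw [segInt_congr hz0 (fun w hw => ?_), segInt_loglike lam (-2 * (1 - (beta:ℂ))) h0 h1 hz0]
  rw [deriv_gf beta lam hb1 h0 h1 hw, deriv2_gf beta lam hb1 h0 h1 hw]
  have hne : hf beta lam w ≠ 0 := Complex.exp_ne_zero _
  have hstep : hf beta lam w * (-2 * (1 - (beta:ℂ))) * (-(lam:ℂ)) * (1 - (lam:ℂ)*w)⁻¹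
      = hf beta lam w * (-2 * (1 - (beta:ℂ)) * (-(lam:ℂ)) * (1 - (lam:ℂ)*w)⁻¹) := by
    ring
  rw [hstep, mul_comm (hf beta lam w), mul_div_assoc, div_self hne, mul_one]


lemma core (beta : ℝ) (hb0 : 0 < beta) (hb1 : beta < 1) {f : ℂ → ℂ}
    (hf : IsInF 1 beta f) :
    ∀ z ∈ unitDisk, deriv (deriv f) z / deriv f z = 2 * (1 - (beta:ℂ)) * (1 - z)⁻¹ := by
  obtain ⟨hdiff, hf0, hf1, hf2, hfne, hre⟩ := hf
  have hβne : (1 - (beta:ℂ)) ≠ 0 := by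
    have : ((beta:ℂ)) ≠ 1 := by exact_mod_cast ne_of_lt hb1
    exact sub_ne_zero.mpr (Ne.symm this)
  have hAn : AnalyticOnNhd ℂ f unitDisk := hdiff.analyticOnNhd isOpen_disk
  have hd1 : AnalyticOnNhd ℂ (deriv f) unitDisk := hAn.deriv
  have hd2 : AnalyticOnNhd ℂ (deriv (deriv f)) unitDisk := hd1.deriv
  have hu : DifferentiableOn ℂ (fun z => deriv (deriv f) z / deriv f z) unitDisk :=
    hd2.differentiableOn.div hd1.differentiableOn hfne
  set P : ℂ → ℂ :=
    fun z => (1 + z * (deriv (deriv f) z / deriv f z) - (beta:ℂ)) / (1 - (beta:ℂ)) with hP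
  have hPdiff : DifferentiableOn ℂ P unitDisk := by
    apply DifferentiableOn.div_const
    exact ((differentiableOn_id.mul hu).const_add 1).sub_const _
  have hPre : ∀ z ∈ unitDisk, 0 < (P z).re := by
    intro z hz
    have h := hre z hz
    rw [mul_div_assoc] at h
    have hval : P z = ((1 + z * (deriv (deriv f) z / deriv f z) - (beta:ℂ))
        / (((1:ℝ) - beta : ℝ):ℂ)) := by rw [hP]; push_cast; ring_nf
    rw [hval, Complex.div_ofReal_re]
    apply div_pos _ (by linarith)
    rw [Complex.sub_re, Complex.ofReal_re]
    linarith
  have hP1 : ∀ z ∈ unitDisk, P z + 1 ≠ 0 := by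
    intro z hz h
    have h2 : P z = -1 := by linear_combination h
    have := hPre z hz
    rw [h2] at this
    norm_num at this
  set ω : ℂ → ℂ := fun z => (P z - 1) / (P z + 1) with hω
  have hωdiff : DifferentiableOn ℂ ω unitDisk :=
    (hPdiff.sub_const 1).div (hPdiff.add_const 1) hP1
  have hmaps : MapsTo ω unitDisk (Metric.ball (0:ℂ) 1) := by
    intro z hz
    have hne := hP1 z hz
    have hre' := hPre z hz
    rw [Metric.mem_ball, dist_zero_right, hω]
    simp only [norm_div]
    rw [div_lt_one (norm_pos_iff.mpr hne)]
    have h1 : Complex.normSq (P z - 1) < Complex.normSq (P z + 1) := by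
      simp only [Complex.normSq_apply, Complex.sub_re, Complex.add_re, Complex.sub_im,
        Complex.add_im, Complex.one_re, Complex.one_im]
      nlinarith
    have h2 := Real.sqrt_lt_sqrt (Complex.normSq_nonneg _) h1
    simpa only [Complex.norm_def] using h2
  have hP0 : P 0 = 1 := by
    rw [hP]
    simp only [zero_mul, add_zero]
    exact div_self hβne
  have hω0 : ω 0 = 0 := by rw [hω]; simp [hP0]
  -- derivative of ω at 0 equals 1
  have hdd : DifferentiableAt ℂ (deriv (deriv f)) 0 := (hd2 0 zero_mem_disk).differentiableAt
  have hdf : DifferentiableAt ℂ (deriv f) 0 := (hd1 0 zero_mem_disk).differentiableAt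
  have hudiff : DifferentiableAt ℂ (fun z => deriv (deriv f) z / deriv f z) 0 :=
    hdd.div hdf (hfne 0 zero_mem_disk)
  set u' := deriv (fun z => deriv (deriv f) z / deriv f z) 0 with hu'
  have hu'd : HasDerivAt (fun z => deriv (deriv f) z / deriv f z) u' 0 := hudiff.hasDerivAt
  have hmul : HasDerivAt (fun z => z * (deriv (deriv f) z / deriv f z))
      (1 * (deriv (deriv f) 0 / deriv f 0) + 0 * u') 0 := (hasDerivAt_id 0).mul hu'd
  have hP' : HasDerivAt P ((1 * (deriv (deriv f) 0 / deriv f 0) + 0 * u') / (1 - (beta:ℂ))) 0 :=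
    ((hmul.const_add 1).sub_const _).div_const _
  have hω' := (hP'.sub_const 1).div (hP'.add_const 1) (hP1 0 zero_mem_disk)
  have hderivω : deriv ω 0 = 1 := by
    rw [HasDerivAt.deriv (f := ω) hω', hP0, hf1, hf2]
    push_cast
    field_simp
    ring
  -- Schwarz lemma and maximum modulus
  have hωdiff' : DifferentiableOn ℂ ω (Metric.ball (0:ℂ) 1) := disk_eq ▸ hωdiff
  have hmaps' : MapsTo ω (Metric.ball (0:ℂ) 1) (Metric.ball (ω 0) 1) := by
    rw [hω0]; exact disk_eq ▸ hmaps
  have hb : ∀ z ∈ Metric.ball (0:ℂ) 1, ‖dslope ω 0 z‖ ≤ 1 := by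
    intro z hz
    have := Complex.norm_dslope_le_div_of_mapsTo_ball hωdiff' (hmaps'.mono_right Metric.ball_subset_closedBall) hz
    simpa using this
  have h0ball : (0:ℂ) ∈ Metric.ball (0:ℂ) 1 := by simp
  have hφ0 : dslope ω 0 0 = 1 := by rw [dslope_same]; exact hderivω
  have hmax : IsMaxOn (norm ∘ dslope ω 0) (Metric.ball (0:ℂ) 1) 0 := by
    apply isMaxOn_iff.mpr
    intro z hz
    simp only [Function.comp_apply, hφ0, norm_one]
    exact hb z hz
  have hφdiff : DifferentiableOn ℂ (dslope ω 0) (Metric.ball (0:ℂ) 1) :=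
    (differentiableOn_dslope (Metric.isOpen_ball.mem_nhds h0ball)).mpr hωdiff'
  have hconst := Complex.eqOn_of_isPreconnected_of_isMaxOn_norm
    (convex_ball (0:ℂ) 1).isPreconnected Metric.isOpen_ball hφdiff h0ball hmax
  have hωz : ∀ z ∈ unitDisk, ω z = z := by
    intro z hz
    rcases eq_or_ne z 0 with rfl | hne
    · exact hω0
    · have hc := hconst (disk_eq ▸ hz)
      rw [dslope_of_ne _ hne, Function.const_apply, hφ0, slope_def_field, hω0, sub_zero,
        sub_zero, div_eq_one_iff_eq hne] at hc
      exact hc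
  -- conclude
  intro z hz
  rcases eq_or_ne z 0 with rfl | hne
  · rw [hf1, hf2]
    simp
  · have hωeq := hωz z hz
    rw [hω] at hωeq
    have h1z : (1:ℂ) - z ≠ 0 := by
      intro h
      have : z = 1 := by linear_combination -h
      rw [mem_disk, this] at hz; simp at hz
    have hPz : P z - 1 = z * (P z + 1) := by
      rw [div_eq_iff (hP1 z hz)] at hωeq
      exact hωeq
    have hPz' : P z * (1 - z) = 1 + z := by linear_combination hPz
    rw [hP] at hPz'
    rw [div_mul_eq_mul_div, div_eq_iff hβne] at hPz'
    set w := deriv (deriv f) z / deriv f z with hwdef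
    have hzz : z * (w * (1 - z)) = z * (2 * (1 - (beta:ℂ))) := by linear_combination hPz'
    have hfin : w * (1 - z) = 2 * (1 - (beta:ℂ)) := mul_left_cancel₀ hne hzz
    field_simp
    linear_combination hfin


lemma logDeriv_unique (beta : ℝ) (hb0 : 0 < beta) (hb1 : beta < 1) {f : ℂ → ℂ}
    (hf : IsInF 1 beta f) {z0 : ℂ} (hz0 : z0 ∈ unitDisk) :
    logDerivAt f z0 = -2 * (1 - (beta:ℂ)) * Complex.log (1 - z0) := by
  unfold logDerivAt
  have hcongr : ∀ w ∈ unitDisk, deriv (deriv f) w / deriv f w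
      = (-2 * (1 - (beta:ℂ))) * (-((1:ℝ):ℂ)) * (1 - ((1:ℝ):ℂ)*w)⁻¹ := by
    intro w hw
    rw [core beta hb0 hb1 hf w hw]
    push_cast
    ring
  rw [segInt_congr hz0 hcongr,
    segInt_loglike 1 (-2 * (1 - (beta:ℂ))) zero_le_one le_rfl hz0]
  norm_num

lemma const_of_deriv_zero {g : ℂ → ℂ} (h : ∀ z ∈ unitDisk, HasDerivAt g 0 z) {z : ℂ}
    (hz : z ∈ unitDisk) : g z = g 0 := by
  have hconv : Convex ℝ unitDisk := disk_eq ▸ convex_ball (0:ℂ) 1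
  apply hconv.is_const_of_fderivWithin_eq_zero
    (fun w hw => (h w hw).differentiableAt.differentiableWithinAt) ?_ hz zero_mem_disk
  intro w hw
  rw [fderivWithin_of_isOpen isOpen_disk hw]
  have h1 : HasFDerivAt g (ContinuousLinearMap.smulRight (1 : ℂ →L[ℂ] ℂ) (0:ℂ)) w :=
    hasDerivAt_iff_hasFDerivAt.mp (h w hw)
  rw [h1.fderiv]
  ext x
  simp

lemma derivEq (beta : ℝ) (hb0 : 0 < beta) (hb1 : beta < 1) {f : ℂ → ℂ}
    (hfF : IsInF 1 beta f) :
    ∀ z ∈ unitDisk, deriv f z = hf beta 1 z := by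
  obtain ⟨hdiff, hf0, hf1, hf2, hfne, hre⟩ := hfF
  have hAn : AnalyticOnNhd ℂ f unitDisk := hdiff.analyticOnNhd isOpen_disk
  have hd1 : AnalyticOnNhd ℂ (deriv f) unitDisk := hAn.deriv
  set c : ℂ := 2 * (1 - (beta:ℂ)) with hc
  set E : ℂ → ℂ := fun z => Complex.exp (c * Complex.log (1 - ((1:ℝ):ℂ)*z)) with hE
  have hEne : ∀ z, E z ≠ 0 := fun z => Complex.exp_ne_zero _
  have hk : ∀ z ∈ unitDisk, HasDerivAt (fun w => deriv f w * E w) 0 z := by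
    intro z hz
    have hdfz : HasDerivAt (deriv f) (deriv (deriv f) z) z :=
      ((hd1 z hz).differentiableAt).hasDerivAt
    have hEz : HasDerivAt E (E z * c * (-((1:ℝ):ℂ)) * (1 - ((1:ℝ):ℂ)*z)⁻¹) z :=
      hasDerivAt_explog c (hasDerivAt_inner (((1:ℝ):ℂ)) z) (slit zero_le_one le_rfl hz)
    have hprod := hdfz.mul hEz
    have hcore := core beta hb0 hb1 ⟨hdiff, hf0, hf1, hf2, hfne, hre⟩ z hz
    rw [div_eq_iff (hfne z hz)] at hcore
    refine hprod.congr_deriv (Eq.symm ?_)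
    rw [hcore]
    push_cast
    ring
  intro z hz
  have h1 : deriv f z * E z = deriv f 0 * E 0 := const_of_deriv_zero hk hz
  have hE0 : E 0 = 1 := by simp [hE]
  rw [hf1, hE0, mul_one] at h1
  have : deriv f z = (E z)⁻¹ := by
    rw [inv_eq_one_div, eq_div_iff (hEne z)]
    exact h1
  rw [this, hE]
  simp only [hf]
  rw [← Complex.exp_neg]
  congr 1
  push_cast
  ring

lemma gf_one (beta : ℝ) :
    gf beta 1 = fun z =>
      segInt (fun ξ => Complex.exp (-2 * (1 - (beta:ℂ)) * Complex.log (1 - ξ))) z := by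
  funext z
  unfold gf hf
  congr 1
  funext ξ
  norm_num

lemma eqOn_gf (beta : ℝ) (hb0 : 0 < beta) (hb1 : beta < 1) {f : ℂ → ℂ}
    (hfF : IsInF 1 beta f) : Set.EqOn f (gf beta 1) unitDisk := by
  intro z hz
  have hdf := derivEq beta hb0 hb1 hfF
  have hsub : ∀ w ∈ unitDisk, HasDerivAt (fun y => f y - gf beta 1 y) 0 w := by
    intro w hw
    have h1 : HasDerivAt f (deriv f w) w :=
      (hfF.1.differentiableAt (isOpen_disk.mem_nhds hw)).hasDerivAt
    have h2 := hasDerivAt_gf beta 1 hb1 zero_le_one le_rfl w hw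
    have := h1.sub h2
    rw [hdf w hw, sub_self] at this
    exact this
  have := const_of_deriv_zero hsub hz
  have h0 : f 0 - gf beta 1 0 = 0 := by
    rw [hfF.2.1]
    simp [gf, segInt]
  rw [h0] at this
  have := sub_eq_zero.mp this
  exact this

end Vdeg

/-- if `λ = 1` or `z0 = 0` then `V(z0,λ,β) = {-2(1-β) log(1-λ z0)}`;
in particular for `λ = 1` the class `F(1,β)` consists of the single function
`f(z) = ∫_0^z exp(-2(1-β) log(1-ξ)) dξ`. -/
theorem V_degenerate (beta lam : ℝ) (hbeta : 0 < beta ∧ beta < 1)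
    (hlam : 0 ≤ lam ∧ lam ≤ 1) (z0 : ℂ) (hz0 : z0 ∈ unitDisk)
    (hdeg : lam = 1 ∨ z0 = 0) :
    V z0 lam beta = {-2 * (1 - (beta : ℂ)) * Complex.log (1 - (lam : ℂ) * z0)} ∧
      (lam = 1 →
        (IsInF 1 beta
          (fun z => segInt (fun ξ => Complex.exp (-2 * (1 - (beta : ℂ)) * Complex.log (1 - ξ))) z)) ∧
        ∀ f : ℂ → ℂ, IsInF 1 beta f →
          Set.EqOn f
            (fun z => segInt (fun ξ => Complex.exp (-2 * (1 - (beta : ℂ)) * Complex.log (1 - ξ))) z)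
            unitDisk) := by
  obtain ⟨hb0, hb1⟩ := hbeta
  obtain ⟨hl0, hl1⟩ := hlam
  constructor
  · ext w
    simp only [V, Set.mem_setOf_eq, Set.mem_singleton_iff]
    constructor
    · rintro ⟨f, hfF, rfl⟩
      rcases hdeg with h1 | h0
      · subst h1
        rw [Vdeg.logDeriv_unique beta hb0 hb1 hfF hz0]
        norm_num
      · subst h0
        simp [logDerivAt, segInt]
    · rintro rfl
      exact ⟨Vdeg.gf beta lam, Vdeg.isInF_gf beta lam hb0 hb1 hl0 hl1,
        Vdeg.logDeriv_gf beta lam hb0 hb1 hl0 hl1 hz0⟩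
  · intro h1
    subst h1
    constructor
    · rw [← Vdeg.gf_one beta]
      exact Vdeg.isInF_gf beta 1 hb0 hb1 zero_le_one le_rfl
    · intro f hfF
      rw [← Vdeg.gf_one beta]
      exact Vdeg.eqOn_gf beta hb0 hb1 hfF
end
end

section
/- Let 0<β<1 and 0≤λ<1. For every f ∈ F(λ,β) and every z ∈ D, one has |f''(z)/f'(z) - c(z,λ,β)| ≤ r(z,λ,β), where c(z,λ,β) = 2(1-β)(λ(1-|z|²)+(|z|²-λ²)·conj(z)) / ((1-|z|²)(1-2λ Re z+|z|²)) and r(z,λ,β) = 2(1-β)(1-λ²)|z| / ((1-|z|²)(1-2λ Re z+|z|²)). -/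
open Complex Set MeasureTheory Metric

noncomputable section

/-- The center function `c(z,λ,β)`. -/
def cval (z : ℂ) (lam beta : ℝ) : ℂ :=
  ((2 * (1 - beta) : ℝ) : ℂ) *
    (((lam * (1 - ‖z‖ ^ 2) : ℝ) : ℂ) +
      ((‖z‖ ^ 2 - lam ^ 2 : ℝ) : ℂ) * (starRingEnd ℂ) z) /
    (((1 - ‖z‖ ^ 2) * (1 - 2 * lam * z.re + ‖z‖ ^ 2) : ℝ) : ℂ)

/-- The radius function `r(z,λ,β)`. -/
def rval (z : ℂ) (lam beta : ℝ) : ℝ :=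
  2 * (1 - beta) * (1 - lam ^ 2) * ‖z‖ /
    ((1 - ‖z‖ ^ 2) * (1 - 2 * lam * z.re + ‖z‖ ^ 2))

lemma den_pos {z : ℂ} (lam : ℝ) (hz : ‖z‖ < 1) (hlam0 : 0 ≤ lam) (hlam1 : lam < 1) :
    0 < (1 - ‖z‖ ^ 2) * (1 - 2 * lam * z.re + ‖z‖ ^ 2) := by
  have h0 : (0:ℝ) ≤ ‖z‖ := (norm_nonneg z)
  have hre : |z.re| ≤ ‖z‖ := Complex.abs_re_le_norm z
  have h1 : ‖z‖ ^ 2 < 1 := by nlinarith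
  have h2 : 0 < 1 - 2 * lam * z.re + ‖z‖ ^ 2 := by
    rcases abs_le.mp hre with ⟨hl, hr⟩
    nlinarith
  nlinarith

lemma main_algebra (beta lam : ℝ) (hbeta : beta < 1) (hlam0 : 0 ≤ lam) (hlam1 : lam < 1)
    (z v : ℂ) (hz : ‖z‖ < 1) (hv : ‖v‖ ≤ ‖z‖) :
    ‖(2 * (1 - (beta:ℂ))) * (v + (lam:ℂ)) /
        ((1 - (lam:ℂ) * z) + v * ((lam:ℂ) - z)) - cval z lam beta‖ ≤ rval z lam beta := by
  set d : ℂ := 1 - (lam:ℂ) * z with hd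
  set cc : ℂ := (lam:ℂ) - z with hcc
  set den : ℝ := (1 - ‖z‖ ^ 2) * (1 - 2 * lam * z.re + ‖z‖ ^ 2) with hden
  have hdenpos : 0 < den := den_pos lam hz hlam0 hlam1
  -- den as normSq identity
  have hns : den = Complex.normSq d - Complex.normSq cc * Complex.normSq z := by
    simp only [hd, hcc, Complex.normSq_apply, Complex.sub_re, Complex.sub_im, Complex.one_re,
      Complex.one_im, Complex.mul_re, Complex.mul_im, Complex.ofReal_re, Complex.ofReal_im,
      hden, Complex.sq_norm, Complex.normSq_apply]
    ring
  -- nonvanishing of the Möbius denominator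
  have hDv : d + v * cc ≠ 0 := by
    intro h
    have h1 : ‖d‖ = ‖v‖ * ‖cc‖ := by
      have : d = -(v * cc) := by linear_combination h
      rw [this, norm_neg, norm_mul]
    have h2 : Complex.normSq d ≤ Complex.normSq v * Complex.normSq cc := by
      have := congrArg (fun t => t ^ 2) h1
      simp only [mul_pow, Complex.sq_norm] at this
      exact this.le
    have h3 : Complex.normSq v ≤ Complex.normSq z := by
      have := mul_self_le_mul_self (norm_nonneg v) hv
      simpa [← Complex.sq_norm, sq] using this
    have h4 : 0 ≤ Complex.normSq cc := Complex.normSq_nonneg cc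
    nlinarith [hdenpos, hns]
  -- the key inequality |conj d * v + conj cc * (z * conj z)| ≤ |z| * |d + v * cc|
  have hineq : ‖(starRingEnd ℂ) d * v + (starRingEnd ℂ) cc * (z * (starRingEnd ℂ) z)‖
      ≤ ‖z‖ * ‖d + v * cc‖ := by
    have h3 : Complex.normSq v ≤ Complex.normSq z := by
      have := mul_self_le_mul_self (norm_nonneg v) hv
      simpa [← Complex.sq_norm, sq] using this
    have hsq : Complex.normSq ((starRingEnd ℂ) d * v + (starRingEnd ℂ) cc * (z * (starRingEnd ℂ) z))
        ≤ Complex.normSq z * Complex.normSq (d + v * cc) := by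
      rw [Complex.normSq_add, Complex.normSq_add]
      simp only [Complex.normSq_mul, Complex.normSq_conj, map_mul, Complex.conj_conj]
      have key : ((starRingEnd ℂ) d * v * (cc * ((starRingEnd ℂ) z * z))).re
          = (d * ((starRingEnd ℂ) v * (starRingEnd ℂ) cc)).re * Complex.normSq z := by
        have h1 : (starRingEnd ℂ) ((starRingEnd ℂ) d * v * (cc * ((starRingEnd ℂ) z * z)))
            = d * ((starRingEnd ℂ) v * (starRingEnd ℂ) cc) * ((Complex.normSq z : ℝ) : ℂ) := by
          simp only [map_mul, Complex.conj_conj, ← Complex.mul_conj]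
          ring
        have h2 := congrArg Complex.re h1
        rw [Complex.conj_re] at h2
        rw [h2]
        simp [Complex.mul_re, Complex.ofReal_re, Complex.ofReal_im]
      rw [key]
      have hprod : 0 ≤ (Complex.normSq d - Complex.normSq cc * Complex.normSq z)
          * (Complex.normSq z - Complex.normSq v) := by
        apply mul_nonneg
        · rw [← hns]; exact hdenpos.le
        · linarith
      nlinarith [hprod]
    have h2 : (0:ℝ) ≤ ‖z‖ * ‖d + v * cc‖ :=
      mul_nonneg (norm_nonneg _) (norm_nonneg _)
    have h1 : ‖(starRingEnd ℂ) d * v + (starRingEnd ℂ) cc * (z * (starRingEnd ℂ) z)‖ ^ 2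
        ≤ (‖z‖ * ‖d + v * cc‖) ^ 2 := by
      rw [Complex.sq_norm, mul_pow, Complex.sq_norm, Complex.sq_norm]
      exact hsq
    exact (pow_le_pow_iff_left₀ (norm_nonneg _) h2 two_ne_zero).mp h1
  -- coercion helpers
  have hc0 : 2 * (1 - (beta:ℂ)) = ((2 * (1 - beta) : ℝ) : ℂ) := by push_cast; ring
  have hl2 : 1 - (lam:ℂ) ^ 2 = ((1 - lam ^ 2 : ℝ) : ℂ) := by push_cast; ring
  have habs2 : ((‖z‖ : ℝ) : ℂ) ^ 2 = z * (starRingEnd ℂ) z := by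
    rw [← Complex.ofReal_pow, Complex.sq_norm]
    exact (Complex.mul_conj z).symm
  have hdenC : ((den : ℝ) : ℂ)
      = d * (starRingEnd ℂ) d - (cc * (starRingEnd ℂ) cc) * (z * (starRingEnd ℂ) z) := by
    rw [hns]
    push_cast
    simp only [← Complex.mul_conj]
  set NUM : ℂ := ((lam * (1 - ‖z‖ ^ 2) : ℝ) : ℂ) +
      ((‖z‖ ^ 2 - lam ^ 2 : ℝ) : ℂ) * (starRingEnd ℂ) z with hNUM
  set K : ℂ := (starRingEnd ℂ) d * v + (starRingEnd ℂ) cc * (z * (starRingEnd ℂ) z) with hK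
  -- the key algebraic identity
  have hE : (v + (lam:ℂ)) * ((den : ℝ) : ℂ) - NUM * (d + v * cc)
      = (1 - (lam:ℂ) ^ 2) * K := by
    rw [hdenC, hNUM, hK, hd, hcc]
    push_cast
    rw [habs2]
    simp only [map_sub, map_mul, map_one, Complex.conj_ofReal]
    ring
  have hden0 : ((den : ℝ) : ℂ) ≠ 0 := Complex.ofReal_ne_zero.mpr hdenpos.ne'
  have hsplit : (2 * (1 - (beta:ℂ))) * (v + (lam:ℂ)) / (d + v * cc) - cval z lam beta
      = 2 * (1 - (beta:ℂ)) * ((1 - (lam:ℂ) ^ 2) * K) / ((d + v * cc) * ((den : ℝ) : ℂ)) := by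
    rw [← hE, cval, ← hNUM, ← hc0]
    rw [show (((1 - ‖z‖ ^ 2) * (1 - 2 * lam * z.re + ‖z‖ ^ 2) : ℝ) : ℂ)
      = ((den : ℝ) : ℂ) by rw [hden]]
    field_simp
  rw [hsplit]
  have haDv : 0 < ‖d + v * cc‖ := norm_pos_iff.mpr hDv
  have hb2 : (0:ℝ) < 2 * (1 - beta) := by linarith
  have hl2p : (0:ℝ) < 1 - lam ^ 2 := by
    nlinarith [mul_nonneg (by linarith : (0:ℝ) ≤ 1 - lam) (by linarith : (0:ℝ) ≤ 1 + lam)]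
  have habs : ‖2 * (1 - (beta:ℂ)) * ((1 - (lam:ℂ) ^ 2) * K) / ((d + v * cc) * ((den : ℝ) : ℂ))‖
      = (2 * (1 - beta)) * ((1 - lam ^ 2) * ‖K‖) / (‖d + v * cc‖ * den) := by
    rw [hc0, hl2, norm_div]
    simp only [norm_mul, Complex.norm_real, Real.norm_eq_abs]
    rw [abs_of_pos (two_pos : (0:ℝ) < 2), abs_of_pos (by linarith : (0:ℝ) < 1 - beta), abs_of_pos hl2p, abs_of_pos hdenpos]
  rw [habs, rval, ← hden]
  rw [div_le_div_iff₀ (by positivity) hdenpos]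
  have hmain := mul_le_mul_of_nonneg_right
    (mul_le_mul_of_nonneg_left hineq (by positivity : (0:ℝ) ≤ 2 * (1 - beta) * (1 - lam ^ 2)))
    hdenpos.le
  nlinarith [hmain]

lemma unitDisk_eq : unitDisk = Metric.ball (0:ℂ) 1 := by
  ext w; simp [unitDisk, Metric.mem_ball, Complex.dist_eq]

lemma psi_frac (lam G Q : ℂ) (hQ : Q ≠ 0) (hden : 1 - lam * (G / Q) ≠ 0) :
    Q - lam * G ≠ 0 ∧ (G / Q - lam) / (1 - lam * (G / Q)) = (G - lam * Q) / (Q - lam * G) := by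
  have h2 : Q - lam * G = Q * (1 - lam * (G / Q)) := by
    rw [mul_sub, mul_one]
    congr 1
    rw [mul_comm lam (G / Q), div_mul_eq_mul_div, mul_comm Q (G * lam / Q),
      div_mul_cancel₀ _ hQ, mul_comm]
  have hne : Q - lam * G ≠ 0 := by rw [h2]; exact mul_ne_zero hQ hden
  have h3 : G / Q - lam = (G - lam * Q) / Q := by
    rw [sub_div]
    congr 1
    rw [mul_div_assoc, div_self hQ, mul_one]
  refine ⟨hne, ?_⟩
  rw [h3, h2, div_div]

lemma mobius_id (c0 lam z G Q : ℂ) (hQG : Q - lam * G ≠ 0) (hl2 : (1:ℂ) - lam ^ 2 ≠ 0)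
    (hc0 : c0 ≠ 0) (hQ : Q = c0 + z * G) :
    G = c0 * ((G - lam * Q) / (Q - lam * G) + lam)
        / ((1 - lam * z) + ((G - lam * Q) / (Q - lam * G)) * (lam - z)) := by
  subst hQ
  have hden2 : (1 - lam * z) + ((G - lam * (c0 + z * G)) / ((c0 + z * G) - lam * G)) * (lam - z)
      = (1 - lam ^ 2) * c0 / ((c0 + z * G) - lam * G) := by
    rw [eq_div_iff hQG]
    field_simp
    ring
  have hnum2 : (G - lam * (c0 + z * G)) / ((c0 + z * G) - lam * G) + lam
      = (1 - lam ^ 2) * G / ((c0 + z * G) - lam * G) := by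
    rw [div_add' _ _ _ hQG, div_eq_div_iff hQG hQG]
    ring
  rw [hden2, hnum2]
  rw [eq_comm, div_eq_iff (div_ne_zero (mul_ne_zero hl2 hc0) hQG)]
  field_simp

-- produce v with |v| ≤ |z| and  g z = 2(1-β)(v+λ)/((1-λz)+v(λ-z)),  for z ≠ 0
lemma exists_v (beta lam : ℝ) (hbeta : 0 < beta ∧ beta < 1)
    (hlam : 0 ≤ lam ∧ lam < 1) (f : ℂ → ℂ) (hf : IsInF lam beta f)
    (z : ℂ) (hz : z ∈ unitDisk) (hz0 : z ≠ 0) :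
    ∃ v : ℂ, ‖v‖ ≤ ‖z‖ ∧
      deriv (deriv f) z / deriv f z
        = (2 * (1 - (beta:ℂ))) * (v + (lam:ℂ)) / ((1 - (lam:ℂ) * z) + v * ((lam:ℂ) - z)) := by
  obtain ⟨hfd, hf0, hf'0, hf''0, hf'ne, hre⟩ := hf
  rw [unitDisk_eq] at hfd hf'ne hre hz
  have hopen : IsOpen (Metric.ball (0:ℂ) 1) := Metric.isOpen_ball
  set g : ℂ → ℂ := fun ξ => deriv (deriv f) ξ / deriv f ξ with hgdef
  -- analyticity of g
  have hfa : AnalyticOnNhd ℂ f (Metric.ball (0:ℂ) 1) := hfd.analyticOnNhd hopen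
  have hf'a : AnalyticOnNhd ℂ (deriv f) (Metric.ball (0:ℂ) 1) := hfa.deriv
  have hf''a : AnalyticOnNhd ℂ (deriv (deriv f)) (Metric.ball (0:ℂ) 1) := hf'a.deriv
  have hg : DifferentiableOn ℂ g (Metric.ball (0:ℂ) 1) :=
    hf''a.differentiableOn.div hf'a.differentiableOn hf'ne
  set c0 : ℂ := 2 * (1 - (beta:ℂ)) with hc0def
  -- real part bound for the denominator
  have hRe : ∀ ξ ∈ Metric.ball (0:ℂ) 1, 1 - beta < (c0 + ξ * g ξ).re := by
    intro ξ hξ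
    have h := hre ξ hξ
    have hxg : ξ * g ξ = ξ * deriv (deriv f) ξ / deriv f ξ := by
      rw [hgdef]; ring
    have : (1:ℝ) + (ξ * deriv (deriv f) ξ / deriv f ξ).re > beta := by
      simpa [Complex.add_re] using h
    have hc0re : c0.re = 2 * (1 - beta) := by simp [hc0def]
    rw [Complex.add_re, hc0re, hxg]
    linarith
  have hQne : ∀ ξ ∈ Metric.ball (0:ℂ) 1, c0 + ξ * g ξ ≠ 0 := by
    intro ξ hξ h0
    have := hRe ξ hξ
    rw [h0] at this
    simp only [Complex.zero_re] at this
    linarith [hbeta.2]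
  set ω : ℂ → ℂ := fun ξ => ξ * g ξ / (c0 + ξ * g ξ) with hωdef
  have hωd : DifferentiableOn ℂ ω (Metric.ball (0:ℂ) 1) := by
    apply DifferentiableOn.div
    · exact (differentiableOn_id).mul hg
    · exact (differentiableOn_const _).add ((differentiableOn_id).mul hg)
    · exact hQne
  have hω0 : ω 0 = 0 := by simp [hωdef]
  have hωmaps : MapsTo ω (Metric.ball (0:ℂ) 1) (Metric.ball (0:ℂ) 1) := by
    intro ξ hξ
    rw [Metric.mem_ball, Complex.dist_eq, sub_zero, hωdef]
    simp only
    rw [norm_div]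
    have hQa : 0 < ‖c0 + ξ * g ξ‖ := norm_pos_iff.mpr (hQne ξ hξ)
    rw [div_lt_one hQa]
    -- |w| < |c0 + w| given Re(c0 + w) > 1 - β > 0 and c0 real = 2(1-β)
    have hsq : Complex.normSq (ξ * g ξ) < Complex.normSq (c0 + ξ * g ξ) := by
      have hr := hRe ξ hξ
      set w : ℂ := ξ * g ξ
      have hc0w : c0 + w = ((2 * (1 - beta) : ℝ) : ℂ) + w := by
        rw [hc0def]; push_cast; ring
      rw [hc0w] at hr ⊢
      rw [Complex.normSq_apply, Complex.normSq_apply] at *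
      simp only [Complex.add_re, Complex.add_im, Complex.ofReal_re, Complex.ofReal_im,
        zero_add] at *
      nlinarith [hbeta.2, hr]
    have := Real.sqrt_lt_sqrt (Complex.normSq_nonneg _) hsq
    rwa [← Complex.norm_def, ← Complex.norm_def] at this
  -- derivative of ω at 0 equals lam
  have h0mem : (0:ℂ) ∈ Metric.ball (0:ℂ) 1 := by simp
  have hg0 : g 0 = 2 * (lam:ℂ) * (1 - (beta:ℂ)) := by
    rw [hgdef]; simp only; rw [hf''0, hf'0, div_one]
  have hβne : (1 : ℂ) - (beta:ℂ) ≠ 0 := by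
    intro h
    have : (beta:ℂ) = 1 := by linear_combination -h
    have := congrArg Complex.re this
    simp at this
    linarith [hbeta.2]
  have hgd0 : DifferentiableAt ℂ g 0 := (hg.differentiableAt (hopen.mem_nhds h0mem))
  have hnum : HasDerivAt (fun ξ : ℂ => ξ * g ξ) (g 0) 0 := by
    have := (hasDerivAt_id' (0:ℂ)).fun_mul hgd0.hasDerivAt
    simpa using this
  have hden : HasDerivAt (fun ξ : ℂ => c0 + ξ * g ξ) (g 0) 0 := hnum.const_add c0
  have hc0ne : c0 + 0 * g 0 ≠ 0 := hQne 0 h0mem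
  have hω' : HasDerivAt ω ((g 0 * (c0 + 0 * g 0) - 0 * g 0 * g 0) / (c0 + 0 * g 0) ^ 2) 0 :=
    hnum.div hden hc0ne
  have hderiv0 : deriv ω 0 = (lam:ℂ) := by
    rw [hω'.deriv]
    rw [hg0]
    simp only [zero_mul, mul_zero, sub_zero, add_zero]
    rw [hc0def]
    field_simp
  -- φ = dslope ω 0
  set φ : ℂ → ℂ := dslope ω 0 with hφdef
  have hφd : DifferentiableOn ℂ φ (Metric.ball (0:ℂ) 1) :=
    (Complex.differentiableOn_dslope (hopen.mem_nhds h0mem)).mpr hωd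
  have hφ0 : φ 0 = (lam:ℂ) := by rw [hφdef, dslope_same]; exact hderiv0
  have hφle : ∀ ξ ∈ Metric.ball (0:ℂ) 1, ‖φ ξ‖ ≤ 1 := by
    intro ξ hξ
    rcases eq_or_ne ξ 0 with rfl | hne
    · rw [hφ0, Complex.norm_real, Real.norm_eq_abs, _root_.abs_of_nonneg hlam.1]; linarith [hlam.2]
    · rw [hφdef, dslope_of_ne _ hne, slope_def_field]
      have hωle : ‖ω ξ‖ ≤ ‖ξ‖ := by
        apply Complex.norm_le_norm_of_mapsTo_ball hωd (hωmaps.mono_right Metric.ball_subset_closedBall) hω0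
        rwa [Metric.mem_ball, Complex.dist_eq, sub_zero] at hξ
      rw [hω0, sub_zero, sub_zero, norm_div]
      rw [div_le_one (norm_pos_iff.mpr hne)]
      exact hωle
  -- ψ and Schwarz
  set ψ : ℂ → ℂ := fun ξ => (φ ξ - (lam:ℂ)) / (1 - (lam:ℂ) * φ ξ) with hψdef
  have hψden : ∀ ξ ∈ Metric.ball (0:ℂ) 1, 1 - (lam:ℂ) * φ ξ ≠ 0 := by
    intro ξ hξ h0
    have h1 : ‖(lam:ℂ) * φ ξ‖ = 1 := by
      have : (lam:ℂ) * φ ξ = 1 := by linear_combination -h0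
      rw [this]; simp
    rw [norm_mul, Complex.norm_real, Real.norm_eq_abs, _root_.abs_of_nonneg hlam.1] at h1
    have := hφle ξ hξ
    nlinarith [hlam.2, norm_nonneg (φ ξ)]
  have hψd : DifferentiableOn ℂ ψ (Metric.ball (0:ℂ) 1) := by
    apply DifferentiableOn.div
    · exact hφd.sub_const _
    · exact (differentiableOn_const _).sub ((differentiableOn_const _).mul hφd)
    · exact hψden
  have hψ0 : ψ 0 = 0 := by
    rw [hψdef]; simp only; rw [hφ0]; simp
  have hψle : ∀ ξ ∈ Metric.ball (0:ℂ) 1, ‖ψ ξ‖ ≤ 1 := by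
    intro ξ hξ
    rw [hψdef]
    simp only
    rw [norm_div, div_le_one (norm_pos_iff.mpr (hψden ξ hξ))]
    have hsq : Complex.normSq (φ ξ - (lam:ℂ)) ≤ Complex.normSq (1 - (lam:ℂ) * φ ξ) := by
      have hb : Complex.normSq (φ ξ) ≤ 1 := by
        have := hφle ξ hξ
        rw [← Complex.sq_norm]
        nlinarith [norm_nonneg (φ ξ)]
      have hl2 : (0:ℝ) ≤ 1 - lam ^ 2 := by
        nlinarith [mul_nonneg (by linarith [hlam.2] : (0:ℝ) ≤ 1 - lam)
          (by linarith [hlam.1] : (0:ℝ) ≤ 1 + lam)]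
      simp only [Complex.normSq_apply, Complex.sub_re, Complex.sub_im, Complex.one_re,
        Complex.one_im, Complex.mul_re, Complex.mul_im, Complex.ofReal_re,
        Complex.ofReal_im] at hb ⊢
      nlinarith [mul_nonneg hl2 (by linarith : (0:ℝ) ≤ 1 - ((φ ξ).re * (φ ξ).re + (φ ξ).im * (φ ξ).im))]
    have := Real.sqrt_le_sqrt hsq
    rwa [← Complex.norm_def, ← Complex.norm_def] at this
  have hψz : ‖ψ z‖ ≤ ‖z‖ := by
    by_contra hcon
    push_neg at hcon
    have hzpos : 0 < ‖z‖ := norm_pos_iff.mpr hz0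
    set ε : ℝ := (‖ψ z‖ - ‖z‖) / (2 * ‖z‖) with hεdef
    have hε : 0 < ε := by
      apply div_pos; linarith; linarith
    have hmaps : MapsTo ψ (Metric.ball (0:ℂ) 1) (Metric.closedBall (ψ 0) (1 + ε)) := by
      intro ξ hξ
      rw [Metric.mem_closedBall, hψ0, Complex.dist_eq, sub_zero]
      have := hψle ξ hξ
      linarith
    have := Complex.dist_le_div_mul_dist_of_mapsTo_ball hψd hmaps hz
    rw [hψ0, Complex.dist_eq, Complex.dist_eq, sub_zero, sub_zero, div_one] at this
    -- abs (ψ z) ≤ (1+ε) * abs z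
    rw [hεdef] at this
    have h2 : (1 + (‖ψ z‖ - ‖z‖) / (2 * ‖z‖)) * ‖z‖
        = ‖z‖ + (‖ψ z‖ - ‖z‖) / 2 := by
      field_simp
    rw [h2] at this
    linarith
  -- now assemble
  refine ⟨ψ z, hψz, ?_⟩
  have hu : φ z = g z / (c0 + z * g z) := by
    rw [hφdef, dslope_of_ne _ hz0, slope_def_field, hω0, sub_zero, sub_zero]
    show z * g z / (c0 + z * g z) / z = g z / (c0 + z * g z)
    rw [div_div, mul_comm (c0 + z * g z) z, mul_div_mul_left _ _ hz0]
  have hQne' : c0 + z * g z ≠ 0 := hQne z hz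
  have hψden' : (1:ℂ) - (lam:ℂ) * (g z / (c0 + z * g z)) ≠ 0 := by
    have := hψden z hz
    rwa [hu] at this
  obtain ⟨hvden, hfrac⟩ := psi_frac (lam:ℂ) (g z) (c0 + z * g z) hQne' hψden'
  have hv : ψ z = (g z - (lam:ℂ) * (c0 + z * g z)) / ((c0 + z * g z) - (lam:ℂ) * g z) := by
    rw [hψdef]
    simp only
    rw [hu]
    exact hfrac
  have hl2ne : (1:ℂ) - (lam:ℂ) ^ 2 ≠ 0 := by
    intro h
    have h2 : ((1 - lam ^ 2 : ℝ) : ℂ) = 0 := by push_cast; linear_combination h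
    rw [Complex.ofReal_eq_zero] at h2
    nlinarith [hlam.1, hlam.2]
  have hc0ne' : c0 ≠ 0 := by
    rw [hc0def]
    exact mul_ne_zero two_ne_zero hβne
  rw [hv]
  exact mobius_id c0 (lam:ℂ) z (g z) (c0 + z * g z) hvden hl2ne hc0ne' rfl

/-- for `f ∈ F(λ,β)` with `0 ≤ λ < 1` and `z ∈ D`,
`|f''(z)/f'(z) - c(z,λ,β)| ≤ r(z,λ,β)`. -/
theorem dist_logderiv_le (beta lam : ℝ) (hbeta : 0 < beta ∧ beta < 1)
    (hlam : 0 ≤ lam ∧ lam < 1) (f : ℂ → ℂ) (hf : IsInF lam beta f)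
    (z : ℂ) (hz : z ∈ unitDisk) :
    ‖deriv (deriv f) z / deriv f z - cval z lam beta‖ ≤ rval z lam beta := by
  rcases eq_or_ne z 0 with rfl | hz0
  · obtain ⟨hfd, hf0, hf'0, hf''0, hf'ne, hre⟩ := hf
    have h1 : deriv (deriv f) 0 / deriv f 0 = 2 * (lam:ℂ) * (1 - (beta:ℂ)) := by
      rw [hf''0, hf'0, div_one]
    rw [h1, cval, rval]
    simp only [map_zero, Complex.zero_re]
    norm_num
    rw [show 2 * (lam:ℂ) * (1 - (beta:ℂ)) - 2 * (1 - (beta:ℂ)) * (lam:ℂ) = 0 by ring]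
  · have hz' : ‖z‖ < 1 := hz
    obtain ⟨v, hvle, hveq⟩ := exists_v beta lam hbeta hlam f hf z hz hz0
    rw [hveq]
    exact main_algebra beta lam hbeta.2 hlam.1 hlam.2 z v hz' hvle
end
end
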